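/- Let p ∈ (1, ∞), p ≠ 2, λ ≤ 0, and set φ(x) = (1/p) λ |λ|^{p-2} |x|^p on ℝ^d. Then the p-transform of φ, defined by φ^p(y) = inf_{x ∈ ℝ^d} { (1/p)|x - y|^p − φ(x) }, equals φ^p(y) = (1/p) g_p(λ) |y|^p, where g_p(λ) = (|λ|/(1+|λ|))^{p-1}, and the infimum is attained uniquely at x = y/(1+|λ|). -/

import Mathlib

open Real

lemma rpow_split {x : ℝ} (p : ℝ) (hx : 0 < x) : x ^ p = x ^ (p - 1) * x := by
  rw [← Real.rpow_add_one hx.ne' (p - 1)]; ring_nf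

lemma key_eq (p μ b : ℝ) (hp : 1 < p) (hμ : 0 < μ) (hb : 0 ≤ b) :
    (μ / (1 + μ)) ^ (p - 1) * (μ * b + b) ^ p = (μ * b) ^ p + μ ^ (p - 1) * b ^ p := by
  have h1μ : (0:ℝ) < 1 + μ := by linarith
  have hbb : μ * b + b = (1 + μ) * b := by ring
  have e1 : μ ^ p = μ ^ (p - 1) * μ := rpow_split p hμ
  have e2 : (1 + μ) ^ p = (1 + μ) ^ (p - 1) * (1 + μ) := rpow_split p h1μ
  rw [hbb, Real.div_rpow hμ.le h1μ.le, Real.mul_rpow h1μ.le hb, Real.mul_rpow hμ.le hb,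
    e1, e2]
  have hM : (0:ℝ) < μ ^ (p - 1) := Real.rpow_pos_of_pos hμ _
  have hN : (0:ℝ) < (1 + μ) ^ (p - 1) := Real.rpow_pos_of_pos h1μ _
  field_simp
  ring

lemma key_lt (p μ a b : ℝ) (hp : 1 < p) (hμ : 0 < μ) (ha : 0 ≤ a) (hb : 0 ≤ b)
    (hne : a ≠ μ * b) :
    (μ / (1 + μ)) ^ (p - 1) * (a + b) ^ p < a ^ p + μ ^ (p - 1) * b ^ p := by
  have h1μ : (0:ℝ) < 1 + μ := by linarith
  set t1 : ℝ := a * (1 + μ) / μ with ht1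
  set t2 : ℝ := b * (1 + μ) with ht2
  have ht1' : t1 ∈ Set.Ici (0:ℝ) := Set.mem_Ici.mpr (by positivity)
  have ht2' : t2 ∈ Set.Ici (0:ℝ) := Set.mem_Ici.mpr (by positivity)
  have hne' : t1 ≠ t2 := by
    intro h
    apply hne
    apply mul_right_cancel₀ h1μ.ne'
    have h' : a * (1 + μ) = b * (1 + μ) * μ := by
      rw [ht1, div_eq_iff hμ.ne'] at h
      linarith [h]
    linarith [h']
  have hw1 : (0:ℝ) < μ / (1 + μ) := by positivity
  have hw2 : (0:ℝ) < 1 / (1 + μ) := by positivity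
  have hsum : μ / (1 + μ) + 1 / (1 + μ) = 1 := by field_simp; ring
  have hconv := (strictConvexOn_rpow hp).2 ht1' ht2' hne' hw1 hw2 hsum
  simp only [smul_eq_mul] at hconv
  have hc : μ / (1 + μ) * t1 + 1 / (1 + μ) * t2 = a + b := by
    rw [ht1, ht2]; field_simp
  rw [hc] at hconv
  have hK : (0:ℝ) < (μ / (1 + μ)) ^ (p - 1) := Real.rpow_pos_of_pos hw1 _
  have hmul := mul_lt_mul_of_pos_left hconv hK
  refine hmul.trans_le (le_of_eq ?_)
  have e1 : μ ^ p = μ ^ (p - 1) * μ := rpow_split p hμ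
  have e2 : (1 + μ) ^ p = (1 + μ) ^ (p - 1) * (1 + μ) := rpow_split p h1μ
  rw [ht1, ht2, Real.div_rpow hμ.le h1μ.le, Real.div_rpow (by positivity) hμ.le, Real.mul_rpow ha h1μ.le,
    Real.mul_rpow hb h1μ.le, e1, e2]
  have hM : (0:ℝ) < μ ^ (p - 1) := Real.rpow_pos_of_pos hμ _
  have hN : (0:ℝ) < (1 + μ) ^ (p - 1) := Real.rpow_pos_of_pos h1μ _
  field_simp

lemma key_le (p μ a b : ℝ) (hp : 1 < p) (hμ : 0 < μ) (ha : 0 ≤ a) (hb : 0 ≤ b) :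
    (μ / (1 + μ)) ^ (p - 1) * (a + b) ^ p ≤ a ^ p + μ ^ (p - 1) * b ^ p := by
  by_cases h : a = μ * b
  · subst h; exact (key_eq p μ b hp hμ hb).le
  · exact (key_lt p μ a b hp hμ ha hb h).le

/-- The `p`-transform of `φ(x) = (1/p) λ |λ|^{p-2} |x|^p` with `λ ≤ 0` equals
`(1/p) (|λ|/(1+|λ|))^{p-1} |y|^p`, with the infimum uniquely attained at `y/(1+|λ|)`. -/
theorem ptransform_of_neg_power
    (d : ℕ) (p lam : ℝ) (hp1 : 1 < p) (hp2 : p ≠ 2) (hlam : lam ≤ 0)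
    (φ : EuclideanSpace ℝ (Fin d) → ℝ)
    (hφ : ∀ x, φ x = (1 / p) * lam * |lam| ^ (p - 2) * ‖x‖ ^ p)
    (y : EuclideanSpace ℝ (Fin d)) :
    (∀ x, (1 / p) * (|lam| / (1 + |lam|)) ^ (p - 1) * ‖y‖ ^ p
        ≤ (1 / p) * ‖x - y‖ ^ p - φ x) ∧
    ((1 / p) * ‖(1 + |lam|)⁻¹ • y - y‖ ^ p - φ ((1 + |lam|)⁻¹ • y)
        = (1 / p) * (|lam| / (1 + |lam|)) ^ (p - 1) * ‖y‖ ^ p) ∧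
    (∀ x, (1 / p) * ‖x - y‖ ^ p - φ x
        = (1 / p) * (|lam| / (1 + |lam|)) ^ (p - 1) * ‖y‖ ^ p →
        x = (1 + |lam|)⁻¹ • y) := by
  have hp0 : (0:ℝ) < p := by linarith
  have hp1' : p - 1 ≠ 0 := by intro h; linarith [sub_eq_zero.mp h]
  rcases hlam.lt_or_eq with hneg | h0
  · -- lam < 0
    have hμ : 0 < |lam| := abs_pos.mpr hneg.ne
    have h1μ : (0:ℝ) < 1 + |lam| := by linarith
    have habs : |lam| = -lam := abs_of_neg hneg
    have e : |lam| ^ (p - 1) = |lam| ^ (p - 2) * |lam| := by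
      have h := rpow_split (p - 1) hμ
      rwa [show p - 1 - 1 = p - 2 from by ring] at h
    have hcoef : ∀ x : EuclideanSpace ℝ (Fin d),
        (1 / p) * ‖x - y‖ ^ p - φ x
          = (1 / p) * (‖x - y‖ ^ p + |lam| ^ (p - 1) * ‖x‖ ^ p) := by
      intro x
      rw [hφ x, e, habs]
      ring
    have hK : (0:ℝ) < (|lam| / (1 + |lam|)) ^ (p - 1) :=
      Real.rpow_pos_of_pos (by positivity) _
    have htri : ∀ x : EuclideanSpace ℝ (Fin d), ‖y‖ ≤ ‖x - y‖ + ‖x‖ := by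
      intro x
      calc ‖y‖ = ‖y - x + x‖ := by rw [sub_add_cancel]
        _ ≤ ‖y - x‖ + ‖x‖ := norm_add_le _ _
        _ = ‖x - y‖ + ‖x‖ := by rw [norm_sub_rev]
    refine ⟨?_, ?_, ?_⟩
    · -- lower bound
      intro x
      rw [hcoef x]
      have h1 : (|lam| / (1 + |lam|)) ^ (p - 1) * ‖y‖ ^ p
          ≤ (|lam| / (1 + |lam|)) ^ (p - 1) * (‖x - y‖ + ‖x‖) ^ p :=
        mul_le_mul_of_nonneg_left
          (Real.rpow_le_rpow (norm_nonneg y) (htri x) hp0.le) hK.le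
      have h2 := key_le p |lam| ‖x - y‖ ‖x‖ hp1 hμ (norm_nonneg _) (norm_nonneg _)
      rw [mul_assoc]
      exact mul_le_mul_of_nonneg_left (h1.trans h2) (by positivity)
    · -- attainment
      have hsub : ‖(1 + |lam|)⁻¹ • y - y‖ = |lam| / (1 + |lam|) * ‖y‖ := by
        rw [show (1 + |lam|)⁻¹ • y - y = ((1 + |lam|)⁻¹ - 1) • y from by
              rw [sub_smul, one_smul],
            norm_smul, Real.norm_eq_abs,
            show (1 + |lam|)⁻¹ - 1 = -(|lam| / (1 + |lam|)) from by field_simp; ring,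
            abs_neg, abs_of_nonneg (by positivity)]
      have hnx : ‖(1 + |lam|)⁻¹ • y‖ = (1 + |lam|)⁻¹ * ‖y‖ := by
        rw [norm_smul, Real.norm_eq_abs, abs_of_nonneg (by positivity)]
      rw [hcoef ((1 + |lam|)⁻¹ • y), hsub, hnx]
      have hkey := key_eq p |lam| ((1 + |lam|)⁻¹ * ‖y‖) hp1 hμ (by positivity)
      rw [show |lam| * ((1 + |lam|)⁻¹ * ‖y‖) + (1 + |lam|)⁻¹ * ‖y‖ = ‖y‖ from by
            field_simp; ring] at hkey
      rw [show (|lam| / (1 + |lam|) * ‖y‖ : ℝ) = |lam| * ((1 + |lam|)⁻¹ * ‖y‖) from by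
            ring]
      linear_combination (-(1 / p)) * hkey
    · -- uniqueness
      intro x hx
      rw [hcoef x, mul_assoc] at hx
      have hx' : ‖x - y‖ ^ p + |lam| ^ (p - 1) * ‖x‖ ^ p
          = (|lam| / (1 + |lam|)) ^ (p - 1) * ‖y‖ ^ p :=
        mul_left_cancel₀ (show (1 / p : ℝ) ≠ 0 by positivity) hx
      have h2 := key_le p |lam| ‖x - y‖ ‖x‖ hp1 hμ (norm_nonneg _) (norm_nonneg _)
      have heq1 : ‖x - y‖ = |lam| * ‖x‖ := by
        by_contra hne
        have hlt := key_lt p |lam| ‖x - y‖ ‖x‖ hp1 hμ (norm_nonneg _) (norm_nonneg _) hne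
        have h1 : (|lam| / (1 + |lam|)) ^ (p - 1) * ‖y‖ ^ p
            ≤ (|lam| / (1 + |lam|)) ^ (p - 1) * (‖x - y‖ + ‖x‖) ^ p :=
          mul_le_mul_of_nonneg_left
            (Real.rpow_le_rpow (norm_nonneg y) (htri x) hp0.le) hK.le
        linarith
      have heq2 : ‖y‖ = ‖x - y‖ + ‖x‖ := by
        by_contra hne
        have hlt : ‖y‖ < ‖x - y‖ + ‖x‖ := lt_of_le_of_ne (htri x) hne
        have h1 : (|lam| / (1 + |lam|)) ^ (p - 1) * ‖y‖ ^ p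
            < (|lam| / (1 + |lam|)) ^ (p - 1) * (‖x - y‖ + ‖x‖) ^ p :=
          mul_lt_mul_of_pos_left
            (Real.rpow_lt_rpow (norm_nonneg y) hlt hp0) hK
        linarith
      have hray : SameRay ℝ (y - x) x := by
        rw [sameRay_iff_norm_add, sub_add_cancel, norm_sub_rev]
        linarith
      by_cases hx0 : x = 0
      · have hb0 : ‖x‖ = 0 := by rw [hx0, norm_zero]
        have hy0 : y = 0 := by
          have : ‖y‖ = 0 := by rw [heq2, heq1, hb0]; ring
          exact norm_eq_zero.mp this
        rw [hx0, hy0, smul_zero]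
      · obtain ⟨r, hr0, hry⟩ := hray.exists_nonneg_right hx0
        have hb0 : ‖x‖ ≠ 0 := norm_ne_zero_iff.mpr hx0
        have hnr : ‖y - x‖ = r * ‖x‖ := by
          rw [hry, norm_smul, Real.norm_eq_abs, abs_of_nonneg hr0]
        have hrμ : r = |lam| := by
          apply mul_right_cancel₀ hb0
          rw [← hnr, norm_sub_rev]
          exact heq1
        rw [hrμ] at hry
        have h5 : y = (1 + |lam|) • x := by
          rw [add_smul, one_smul, add_comm]
          exact sub_eq_iff_eq_add.mp hry
        rw [h5, smul_smul, inv_mul_cancel₀ h1μ.ne', one_smul]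
  · -- lam = 0
    subst h0
    simp only [abs_zero, add_zero, zero_div, inv_one, one_smul,
      Real.zero_rpow hp1', mul_zero, zero_mul]
    have hφ0 : ∀ x, φ x = 0 := by intro x; rw [hφ x]; ring
    refine ⟨?_, ?_, ?_⟩
    · intro x
      rw [hφ0 x, sub_zero]
      positivity
    · rw [hφ0 y, sub_self, norm_zero, Real.zero_rpow hp0.ne']
      ring
    · intro x hx
      rw [hφ0 x, sub_zero] at hx
      have hp' : (1 / p : ℝ) ≠ 0 := by positivity
      have : ‖x - y‖ ^ p = 0 := by
        rcases mul_eq_zero.mp hx with h | h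
        · exact absurd h hp'
        · exact h
      have hnorm : ‖x - y‖ = 0 := by
        by_contra h
        have h' : 0 < ‖x - y‖ := lt_of_le_of_ne (norm_nonneg _) (Ne.symm h)
        exact (Real.rpow_pos_of_pos h' p).ne' this
      have := norm_eq_zero.mp hnorm
      exact sub_eq_zero.mp this
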